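/- Let R be a domain and σ: R → Mₙ(R) a ring homomorphism such that σ(a) is upper triangular with all diagonal entries σ_{ii}(a) nonzero, for every nonzero a ∈ R. Then σ is megainjective. -/

import Mathlib

/-- Index type for the `r`-fold iterate `σ^{(r)}`: `n^r` indices, realized as
`r`-tuples (words of length `r` in `n` letters). -/
def iterIndex (n : ℕ) : ℕ → Type
  | 0 => Unit
  | r + 1 => iterIndex n r × Fin n

instance iterIndexFintype (n : ℕ) : ∀ r : ℕ, Fintype (iterIndex n r)
  | 0 => inferInstanceAs (Fintype Unit)
  | r + 1 => letI := iterIndexFintype n r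
      inferInstanceAs (Fintype (iterIndex n r × Fin n))

instance iterIndexDecEq (n : ℕ) : ∀ r : ℕ, DecidableEq (iterIndex n r)
  | 0 => inferInstanceAs (DecidableEq Unit)
  | r + 1 => letI := iterIndexDecEq n r
      inferInstanceAs (DecidableEq (iterIndex n r × Fin n))

/-- The iterate `σ^{(r)} : R → M_{n^r}(R)`, defined by `σ^{(1)} = σ` (up to the
identification `iterIndex n 1 ≃ Fin n`) and `σ^{(r+1)}(a)` obtained by applying `σ`
entrywise to `σ^{(r)}(a)`. -/
def sigmaIter {R : Type} [Ring R] {n : ℕ} (σ : R →+* Matrix (Fin n) (Fin n) R) :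
    ∀ r : ℕ, R → Matrix (iterIndex n r) (iterIndex n r) R
  | 0 => fun a _ _ => a
  | r + 1 => fun a p q => σ (sigmaIter σ r a p.1 q.1) p.2 q.2

/-- `σ` is megainjective: for every nonzero `a ∈ R` and every `r ≥ 1`, the columns
of `σ^{(r)}(a)` are right `R`-linearly independent (equivalently, `σ^{(r)}(a)` is
neither zero nor a left zero divisor in `M_{n^r}(R)`). -/
def Megainjective {R : Type} [Ring R] {n : ℕ}
    (σ : R →+* Matrix (Fin n) (Fin n) R) : Prop :=
  ∀ a : R, a ≠ 0 → ∀ r : ℕ, 1 ≤ r → ∀ b : iterIndex n r → R,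
    (sigmaIter σ r a).mulVec b = 0 → b = 0


/-- Numeric rank of an iterated index (lexicographic value in base `n`). -/
def idxVal (n : ℕ) : ∀ r : ℕ, iterIndex n r → ℕ
  | 0, _ => 0
  | r + 1, p => idxVal n r p.1 * n + (p.2 : ℕ)

lemma idxVal_injective (n : ℕ) : ∀ r : ℕ, Function.Injective (idxVal n r)
  | 0 => fun p q _ => by cases p; cases q; rfl
  | r + 1 => by
    rintro ⟨p, i⟩ ⟨q, j⟩ h
    simp only [idxVal] at h
    have hi : (i : ℕ) < n := i.isLt
    have hj : (j : ℕ) < n := j.isLt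
    have hij : (i : ℕ) = (j : ℕ) := by
      have := congrArg (· % n) h
      simpa [Nat.add_mul_mod_self_left, Nat.mul_add_mod, Nat.mod_eq_of_lt hi,
        Nat.mod_eq_of_lt hj, Nat.mul_comm] using this
    have hpq : idxVal n r p = idxVal n r q := by
      have hn : 0 < n := Nat.zero_lt_of_lt hi
      have := congrArg (· / n) h
      simpa [Nat.mul_add_div hn, Nat.div_eq_of_lt hi, Nat.div_eq_of_lt hj,
        Nat.mul_comm, Nat.mul_div_cancel _ hn] using this
    have := idxVal_injective n r hpq
    simp [this, Fin.ext hij]; rfl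

lemma sigmaIter_tri {R : Type} [Ring R] [IsDomain R] {n : ℕ}
    (σ : R →+* Matrix (Fin n) (Fin n) R)
    (htri : ∀ a : R, a ≠ 0 →
      (∀ i j : Fin n, j < i → σ a i j = 0) ∧ ∀ i : Fin n, σ a i i ≠ 0) :
    ∀ r : ℕ, ∀ a : R, a ≠ 0 →
      (∀ p q : iterIndex n r, idxVal n r q < idxVal n r p → sigmaIter σ r a p q = 0) ∧
      (∀ p : iterIndex n r, sigmaIter σ r a p p ≠ 0)
  | 0 => fun a ha => ⟨fun p q h => absurd h (by simp [idxVal]), fun _ => ha⟩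
  | r + 1 => fun a ha => by
    obtain ⟨ihlow, ihdiag⟩ := sigmaIter_tri σ htri r a ha
    constructor
    · rintro ⟨p, i⟩ ⟨q, j⟩ h
      simp only [idxVal] at h
      have hi : (i : ℕ) < n := i.isLt
      have hj : (j : ℕ) < n := j.isLt
      rcases lt_trichotomy (idxVal n r q) (idxVal n r p) with hlt | heq | hgt
      · have h0 : sigmaIter σ r a p q = 0 := ihlow p q hlt
        show σ (sigmaIter σ r a p q) i j = 0
        rw [h0, map_zero]; rfl
      · have hji : j < i := by
          rw [heq] at h
          have hji' : (j : ℕ) < (i : ℕ) := by omega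
          exact hji'
        show σ (sigmaIter σ r a p q) i j = 0
        by_cases hx : sigmaIter σ r a p q = 0
        · rw [hx, map_zero]; rfl
        · exact (htri _ hx).1 i j hji
      · exfalso
        have : idxVal n r p * n + n ≤ idxVal n r q * n :=
          by calc idxVal n r p * n + n = (idxVal n r p + 1) * n := by ring
            _ ≤ idxVal n r q * n := Nat.mul_le_mul_right n hgt
        omega
    · rintro ⟨p, i⟩
      show σ (sigmaIter σ r a p p) i i ≠ 0
      exact (htri _ (ihdiag p)).2 i

/-- If `R` is a domain and `σ(a)` is upper triangular with all diagonal entries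
nonzero, for every nonzero `a ∈ R`, then `σ` is megainjective. -/
theorem megainjective_of_upperTriangular {R : Type} [Ring R] [IsDomain R] {n : ℕ}
    (σ : R →+* Matrix (Fin n) (Fin n) R)
    (htri : ∀ a : R, a ≠ 0 →
      (∀ i j : Fin n, j < i → σ a i j = 0) ∧ ∀ i : Fin n, σ a i i ≠ 0) :
    Megainjective σ := by
  classical
  intro a ha r hr b hb
  obtain ⟨tri, diag⟩ := sigmaIter_tri σ htri r a ha
  by_contra hb0
  have hne : (Finset.univ.filter (fun p => b p ≠ 0)).Nonempty := by
    by_contra h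
    apply hb0
    funext p
    by_contra hp
    exact h ⟨p, Finset.mem_filter.mpr ⟨Finset.mem_univ p, hp⟩⟩
  obtain ⟨p, hp, hmax⟩ := Finset.exists_max_image _ (idxVal n r) hne
  have hbp : b p ≠ 0 := (Finset.mem_filter.mp hp).2
  have hsum : ∑ q, sigmaIter σ r a p q * b q = 0 := congrFun hb p
  have hsingle : ∑ q, sigmaIter σ r a p q * b q = sigmaIter σ r a p p * b p := by
    apply Finset.sum_eq_single
    · intro q _ hq
      by_cases hbq : b q = 0
      · rw [hbq, mul_zero]
      · have hle : idxVal n r q ≤ idxVal n r p :=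
          hmax q (Finset.mem_filter.mpr ⟨Finset.mem_univ q, hbq⟩)
        have hlt : idxVal n r q < idxVal n r p :=
          lt_of_le_of_ne hle (fun h => hq (idxVal_injective n r h))
        rw [tri p q hlt, zero_mul]
    · intro h; exact absurd (Finset.mem_univ p) h
  rw [hsingle] at hsum
  rcases mul_eq_zero.mp hsum with h | h
  · exact diag p h
  · exact hbp h
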